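/- Let L be a Lie algebra over a commutative ring and let I_1, …, I_n be Lie ideals of L with n ≥ 2. Then the fat bracket sum equals the symmetric bracket sum: [[I_1, I_2, …, I_n]] = [[I_1, I_2], …, I_n]_S. -/

import Mathlib

/-- Bracket arrangements of weight `t`: `β¹(a₁) = a₁` and every bracket arrangement of
weight `t ≥ 2` has the form `βᵗ(a₁, …, a_t) = [βᵖ(a₁, …, a_p), β^{t-p}(a_{p+1}, …, a_t)]`. -/
inductive BracketArr : ℕ → Type
  | leaf : BracketArr 1
  | node {p q : ℕ} : BracketArr p → BracketArr q → BracketArr (p + q)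

/-- Evaluation of a bracket arrangement of weight `t` on a `t`-tuple of elements
of a Lie ring. -/
def BracketArr.eval {L : Type*} [LieRing L] : ∀ {t : ℕ}, BracketArr t → (Fin t → L) → L
  | _, .leaf, a => a 0
  | _, .node u v, a =>
      ⁅u.eval (fun i => a (Fin.castAdd _ i)), v.eval (fun i => a (Fin.natAdd _ i))⁆

/-- The left-normed bracket of a list of Lie ideals,
`[[⋯[[I₁, I₂], I₃], …], I_m]` (with junk value `⊥` for the empty list). -/
def lnbIdeal {R : Type*} [CommRing R] {L : Type*} [LieRing L] [LieAlgebra R L] :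
    List (LieIdeal R L) → LieIdeal R L
  | [] => ⊥
  | I :: Is => Is.foldl (fun acc J => ⁅acc, J⁆) I

/-- The symmetric bracket sum `[[I₁, I₂], …, I_n]_S = Σ_{σ ∈ Σ_n}
[[I_{σ(1)}, I_{σ(2)}], …, I_{σ(n)}]` of a family of Lie ideals. -/
def symBracketSum {R : Type*} [CommRing R] {L : Type*} [LieRing L] [LieAlgebra R L]
    {n : ℕ} (I : Fin n → LieIdeal R L) : LieIdeal R L :=
  ⨆ σ : Equiv.Perm (Fin n), lnbIdeal (List.ofFn (fun s => I (σ s)))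

/-- The fat bracket sum `[[I₁, I₂, …, I_n]]`: the Lie ideal generated by all elements
`βᵗ(a_{i₁}, …, a_{i_t})`, where `t ≥ n`, `βᵗ` is a bracket arrangement of weight `t`,
every integer in `{1, …, n}` occurs among the indices `i₁, …, i_t`, and `a_{i_s} ∈ I_{i_s}`. -/
def fatBracketSum {R : Type*} [CommRing R] {L : Type*} [LieRing L] [LieAlgebra R L]
    {n : ℕ} (I : Fin n → LieIdeal R L) : LieIdeal R L :=
  LieSubmodule.lieSpan R L
    {x : L | ∃ t : ℕ, n ≤ t ∧ ∃ β : BracketArr t, ∃ idx : Fin t → Fin n,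
      Function.Surjective idx ∧ ∃ a : Fin t → L,
        (∀ s : Fin t, a s ∈ I (idx s)) ∧ x = β.eval a}

section Helpers

variable {R : Type*} [CommRing R] {L : Type*} [LieRing L] [LieAlgebra R L]

/-- Left-normed bracketing starting from an ideal `X`. -/
def lnbFrom (X : LieIdeal R L) (l : List (LieIdeal R L)) : LieIdeal R L :=
  l.foldl (fun acc J => ⁅acc, J⁆) X

lemma lnbIdeal_cons (X : LieIdeal R L) (l : List (LieIdeal R L)) :
    lnbIdeal (X :: l) = lnbFrom X l := rfl

lemma lnbFrom_cons (X A : LieIdeal R L) (l : List (LieIdeal R L)) :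
    lnbFrom X (A :: l) = lnbFrom ⁅X, A⁆ l := rfl

lemma lnbFrom_append (X : LieIdeal R L) (l1 l2 : List (LieIdeal R L)) :
    lnbFrom X (l1 ++ l2) = lnbFrom (lnbFrom X l1) l2 :=
  List.foldl_append

lemma lnbFrom_singleton (X Y : LieIdeal R L) : lnbFrom X [Y] = ⁅X, Y⁆ := rfl

lemma lnbFrom_mono : ∀ (l : List (LieIdeal R L)) {X Y : LieIdeal R L},
    X ≤ Y → lnbFrom X l ≤ lnbFrom Y l
  | [], _, _, h => h
  | J :: l, X, Y, h => by
      rw [lnbFrom_cons, lnbFrom_cons]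
      exact lnbFrom_mono l (LieSubmodule.mono_lie_left _ h)

lemma lnbFrom_le_self : ∀ (l : List (LieIdeal R L)) (X : LieIdeal R L), lnbFrom X l ≤ X
  | [], _ => le_rfl
  | J :: l, X => by
      rw [lnbFrom_cons]
      exact (lnbFrom_le_self l ⁅X, J⁆).trans (LieSubmodule.lie_le_left X J)

lemma iSup_lie_le {ι : Sort*} {A : ι → LieIdeal R L} {B C : LieIdeal R L}
    (h : ∀ i, ⁅A i, B⁆ ≤ C) : ⁅(⨆ i, A i : LieIdeal R L), B⁆ ≤ C := by
  rw [LieSubmodule.lie_le_iff]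
  intro x hx m hm
  refine LieSubmodule.iSup_induction (motive := fun y => ⁅y, m⁆ ∈ C) A hx
    (fun i y hy => h i (LieSubmodule.lie_mem_lie hy hm)) (by simp) ?_
  intro y z hy hz
  rw [add_lie]
  exact C.add_mem hy hz

lemma lie_lie_le_sup (X Y Z : LieIdeal R L) :
    ⁅X, ⁅Y, Z⁆⁆ ≤ ⁅⁅X, Y⁆, Z⁆ ⊔ ⁅⁅X, Z⁆, Y⁆ := by
  rw [LieSubmodule.lie_le_iff]
  intro x hx m hm
  rw [← LieSubmodule.mem_toSubmodule, LieSubmodule.lieIdeal_oper_eq_linear_span'] at hm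
  refine Submodule.span_induction
    (p := fun m _ => ⁅x, m⁆ ∈ ⁅⁅X, Y⁆, Z⁆ ⊔ ⁅⁅X, Z⁆, Y⁆) ?_ ?_ ?_ ?_ hm
  · rintro _ ⟨y, hy, z, hz, rfl⟩
    rw [leibniz_lie]
    refine add_mem ?_ ?_
    · exact (le_sup_left : ⁅⁅X, Y⁆, Z⁆ ≤ _)
        (LieSubmodule.lie_mem_lie (LieSubmodule.lie_mem_lie hx hy) hz)
    · have h2 : ⁅y, ⁅x, z⁆⁆ ∈ ⁅Y, ⁅X, Z⁆⁆ :=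
        LieSubmodule.lie_mem_lie hy (LieSubmodule.lie_mem_lie hx hz)
      rw [LieSubmodule.lie_comm] at h2
      exact (le_sup_right : ⁅⁅X, Z⁆, Y⁆ ≤ _) h2
  · simp
  · intro a b _ _ ha hb
    rw [lie_add]
    exact add_mem ha hb
  · intro r a _ ha
    rw [lie_smul]
    exact Submodule.smul_mem _ r ha

end Helpers

section Part2

variable {R : Type*} [CommRing R] {L : Type*} [LieRing L] [LieAlgebra R L] {α : Type*}

/-- Key expansion lemma: bracketing an ideal `X` with a left-normed bracket of the
ideals `g y, g l₁, …` is bounded by the sum over permutations `K` of `y :: l` of the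
left-normed brackets starting at `X`. -/
lemma lie_lnbFrom_le (g : α → LieIdeal R L) :
    ∀ (l : List α) (X : LieIdeal R L) (y : α),
      ⁅X, lnbFrom (g y) (l.map g)⁆ ≤
        ⨆ K : {K : List α // K.Perm (y :: l)}, lnbFrom X (K.1.map g) := by
  intro l
  induction l using List.reverseRecOn with
  | nil =>
    intro X y
    exact le_iSup_of_le ⟨[y], List.Perm.refl _⟩ le_rfl
  | append_singleton l j ih =>
    intro X y
    rw [List.map_append, lnbFrom_append, List.map_singleton, lnbFrom_singleton]
    refine le_trans (lie_lie_le_sup X _ (g j)) (sup_le ?_ ?_)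
    · refine le_trans (LieSubmodule.mono_lie_left _ (ih X y)) (iSup_lie_le fun K => ?_)
      have h1 : ⁅lnbFrom X (K.1.map g), g j⁆ = lnbFrom X ((K.1 ++ [j]).map g) := by
        rw [List.map_append, lnbFrom_append, List.map_singleton, lnbFrom_singleton]
      rw [h1]
      have hperm : (K.1 ++ [j]).Perm (y :: (l ++ [j])) := by
        have := K.2.append_right [j]
        simpa using this
      exact le_iSup_of_le ⟨K.1 ++ [j], hperm⟩ le_rfl
    · refine le_trans (ih ⁅X, g j⁆ y) (iSup_le fun K => ?_)
      have h1 : lnbFrom ⁅X, g j⁆ (K.1.map g) = lnbFrom X ((j :: K.1).map g) := rfl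
      rw [h1]
      have hperm : (j :: K.1).Perm (y :: (l ++ [j])) := by
        refine ((K.2.cons j).trans ?_)
        have := (List.perm_append_singleton j (y :: l)).symm
        simpa using this
      exact le_iSup_of_le ⟨j :: K.1, hperm⟩ le_rfl

/-- The ideal-level version of a bracket arrangement applied to a list of ideals. -/
def bIdealL {R : Type*} [CommRing R] {L : Type*} [LieRing L] [LieAlgebra R L] :
    ∀ {t : ℕ}, BracketArr t → List (LieIdeal R L) → LieIdeal R L
  | _, .leaf, l => lnbIdeal l
  | _, @BracketArr.node p _ u v, l => ⁅bIdealL u (l.take p), bIdealL v (l.drop p)⁆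

lemma BracketArr.one_le : ∀ {t : ℕ}, BracketArr t → 1 ≤ t
  | _, .leaf => le_rfl
  | _, .node u _ => le_trans u.one_le (Nat.le_add_right _ _)

/-- Any bracket-arrangement ideal is bounded by the sum of left-normed brackets over
permutations of the entries. -/
lemma bIdealL_le_perm_sup (g : α → LieIdeal R L) :
    ∀ {t : ℕ} (β : BracketArr t) (l : List α), l.length = t →
      bIdealL β (l.map g) ≤ ⨆ K : {K : List α // K.Perm l}, lnbIdeal (K.1.map g)
  | _, .leaf, l, _ => le_iSup_of_le ⟨l, List.Perm.refl _⟩ le_rfl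
  | _, @BracketArr.node p q u v, l, hl => by
    have hp : 1 ≤ p := u.one_le
    have hq : 1 ≤ q := v.one_le
    have hA : (l.take p).length = p := by
      rw [List.length_take, hl]
      omega
    have hB : (l.drop p).length = q := by
      rw [List.length_drop, hl]
      omega
    have hu := bIdealL_le_perm_sup g u (l.take p) hA
    have hv := bIdealL_le_perm_sup g v (l.drop p) hB
    show ⁅bIdealL u ((l.map g).take p), bIdealL v ((l.map g).drop p)⁆ ≤ _
    rw [← List.map_take, ← List.map_drop]
    refine le_trans (LieSubmodule.mono_lie hu hv) ?_
    refine iSup_lie_le fun Ka => ?_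
    rw [LieSubmodule.lie_comm]
    refine iSup_lie_le fun Kb => ?_
    rw [LieSubmodule.lie_comm]
    -- split Ka and Kb into head and tail
    obtain ⟨z, Ka', hKa⟩ : ∃ z Ka', Ka.1 = z :: Ka' := by
      have : Ka.1 ≠ [] := by
        intro h
        have := Ka.2.length_eq
        rw [h, hA] at this
        simp at this
        omega
      exact List.exists_cons_of_ne_nil this
    obtain ⟨w, Kb', hKb⟩ : ∃ w Kb', Kb.1 = w :: Kb' := by
      have : Kb.1 ≠ [] := by
        intro h
        have := Kb.2.length_eq
        rw [h, hB] at this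
        simp at this
        omega
      exact List.exists_cons_of_ne_nil this
    rw [hKa, hKb]
    have h1 : lnbIdeal ((z :: Ka').map g) = lnbFrom (g z) (Ka'.map g) := rfl
    have h2 : lnbIdeal ((w :: Kb').map g) = lnbFrom (g w) (Kb'.map g) := rfl
    rw [h1, h2]
    refine le_trans (lie_lnbFrom_le g Kb' (lnbFrom (g z) (Ka'.map g)) w) ?_
    refine iSup_le fun K' => ?_
    have h3 : lnbFrom (lnbFrom (g z) (Ka'.map g)) (K'.1.map g)
        = lnbIdeal (((z :: Ka') ++ K'.1).map g) := by
      rw [List.map_append]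
      rw [List.map_cons, List.cons_append, lnbIdeal_cons, lnbFrom_append]
    rw [h3]
    have hperm : ((z :: Ka') ++ K'.1).Perm l := by
      have ha : (z :: Ka').Perm (l.take p) := hKa ▸ Ka.2
      have hb : K'.1.Perm (l.drop p) := (K'.2.trans (hKb ▸ Kb.2 : (w :: Kb').Perm (l.drop p)))
      exact (ha.append hb).trans (by rw [List.take_append_drop])
    exact le_iSup_of_le ⟨(z :: Ka') ++ K'.1, hperm⟩ le_rfl

end Part2

section Part3

variable {R : Type*} [CommRing R] {L : Type*} [LieRing L] [LieAlgebra R L]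

lemma exists_mem_split {α : Type*} :
    ∀ {l : List α}, ¬ l.Nodup → ∃ x l1 l2, l = l1 ++ x :: l2 ∧ x ∈ l1 := by
  intro l
  induction l with
  | nil => intro h; exact absurd List.nodup_nil h
  | cons a l ih =>
    intro h
    by_cases ha : a ∈ l
    · obtain ⟨s, t, rfl⟩ := List.append_of_mem ha
      exact ⟨a, a :: s, t, rfl, List.mem_cons_self⟩
    · have hnd : ¬ l.Nodup := fun hnd => h (List.nodup_cons.mpr ⟨ha, hnd⟩)
      obtain ⟨x, l1, l2, rfl, hx⟩ := ih hnd
      exact ⟨x, a :: l1, l2, rfl, List.mem_cons_of_mem a hx⟩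

lemma lnb_delete {n : ℕ} (I : Fin n → LieIdeal R L) (j : Fin n) (l1 : List (Fin n))
    (x : Fin n) (l2 : List (Fin n)) :
    lnbIdeal (((j :: l1) ++ x :: l2).map I) ≤ lnbIdeal (((j :: l1) ++ l2).map I) := by
  simp only [List.map_append, List.map_cons, List.cons_append]
  rw [lnbIdeal_cons, lnbIdeal_cons, lnbFrom_append, lnbFrom_append, lnbFrom_cons]
  exact lnbFrom_mono _ (LieSubmodule.lie_le_left _ _)

/-- A left-normed bracket of ideals indexed by a covering list is contained in the
symmetric bracket sum. -/
lemma lnb_covering_le_sym {n : ℕ} (hn : 0 < n) (I : Fin n → LieIdeal R L) :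
    ∀ (N : ℕ) (js : List (Fin n)), js.length ≤ N → (∀ i, i ∈ js) →
      lnbIdeal (js.map I) ≤ symBracketSum I := by
  intro N
  induction N with
  | zero =>
    intro js hlen hcov
    have : js = [] := List.length_eq_zero_iff.mp (Nat.le_zero.mp hlen)
    subst this
    exact absurd (hcov ⟨0, hn⟩) List.not_mem_nil
  | succ N ihN =>
    intro js hlen hcov
    by_cases hnd : js.Nodup
    · -- js enumerates Fin n bijectively
      have hinj : Function.Injective js.get := List.nodup_iff_injective_get.mp hnd
      have hsurj : Function.Surjective js.get := by
        intro i
        obtain ⟨k, hk⟩ := List.mem_iff_get.mp (hcov i)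
        exact ⟨k, hk⟩
      have hbij : Function.Bijective js.get := ⟨hinj, hsurj⟩
      have hcard : n = js.length := by
        simpa using (Fintype.card_of_bijective hbij).symm
      let σ : Equiv.Perm (Fin n) :=
        ((finCongr hcard).trans (Equiv.ofBijective js.get hbij))
      have hEq : js.map I = List.ofFn (fun s => I (σ s)) := by
        refine List.ext_getElem (by simp [← hcard]) ?_
        intro i h1 h2
        simp only [List.getElem_map, List.getElem_ofFn]
        congr 1
      rw [hEq]
      exact le_iSup_of_le σ le_rfl
    · obtain ⟨x, l1, l2, hsplit, hx⟩ := exists_mem_split hnd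
      obtain ⟨j, l1', rfl⟩ := List.exists_cons_of_ne_nil (List.ne_nil_of_mem hx)
      subst hsplit
      refine le_trans (lnb_delete I j l1' x l2) (ihN ((j :: l1') ++ l2) ?_ ?_)
      · have := hlen
        simp only [List.length_append, List.length_cons] at this ⊢
        omega
      · intro i
        have hi := hcov i
        have hx' := List.mem_cons.mp hx
        simp only [List.mem_append, List.mem_cons] at hi ⊢
        rcases hi with h | h | h
        · exact Or.inl h
        · subst h
          tauto
        · tauto

end Part3

section Part4

variable {R : Type*} [CommRing R] {L : Type*} [LieRing L] [LieAlgebra R L]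

lemma eval_mem_bIdealL : ∀ {t : ℕ} (β : BracketArr t) (J : Fin t → LieIdeal R L)
    (a : Fin t → L), (∀ s, a s ∈ J s) → β.eval a ∈ bIdealL β (List.ofFn J)
  | _, .leaf, J, a, h => by
    show a 0 ∈ lnbIdeal (List.ofFn J)
    simpa [lnbIdeal, List.ofFn_succ] using h 0
  | _, @BracketArr.node p q u v, J, a, h => by
    have hu := eval_mem_bIdealL u (fun i => J (Fin.castAdd q i)) (fun i => a (Fin.castAdd q i))
      (fun s => h _)
    have hv := eval_mem_bIdealL v (fun i => J (Fin.natAdd p i)) (fun i => a (Fin.natAdd p i))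
      (fun s => h _)
    show ⁅_, _⁆ ∈ ⁅bIdealL u ((List.ofFn J).take p), bIdealL v ((List.ofFn J).drop p)⁆
    have htake : (List.ofFn J).take p = List.ofFn (fun i => J (Fin.castAdd q i)) := by
      rw [List.ofFn_add (f := J)]
      exact List.take_left' (by simp)
    have hdrop : (List.ofFn J).drop p = List.ofFn (fun i => J (Fin.natAdd p i)) := by
      rw [List.ofFn_add (f := J)]
      exact List.drop_left' (by simp)
    rw [htake, hdrop]
    exact LieSubmodule.lie_mem_lie hu hv

lemma lnbIdeal_concat (J : LieIdeal R L) :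
    ∀ (l : List (LieIdeal R L)), l ≠ [] → lnbIdeal (l.concat J) = ⁅lnbIdeal l, J⁆
  | [], h => absurd rfl h
  | X :: l, _ => by
    rw [List.concat_cons, lnbIdeal_cons, lnbIdeal_cons, List.concat_eq_append,
      lnbFrom_append, lnbFrom_singleton]

/-- Every element of a left-normed bracket of the ideals `I (f 0), …, I (f m)` lies in the
linear span of evaluations of bracket arrangements. -/
lemma lnb_mem_span {n : ℕ} (I : Fin n → LieIdeal R L) :
    ∀ (m : ℕ) (f : Fin (m + 1) → Fin n) (x : L),
      x ∈ lnbIdeal (List.ofFn (fun s => I (f s))) →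
      x ∈ Submodule.span R {y : L | ∃ (β : BracketArr (m + 1)) (a : Fin (m + 1) → L),
        (∀ s, a s ∈ I (f s)) ∧ y = β.eval a} := by
  intro m
  induction m with
  | zero =>
    intro f x hx
    refine Submodule.subset_span ⟨.leaf, fun _ => x, fun s => ?_, rfl⟩
    have hs : s = 0 := Fin.ext (by omega)
    subst hs
    simpa [lnbIdeal, List.ofFn_succ] using hx
  | succ m ih =>
    intro f x hx
    rw [List.ofFn_succ'] at hx
    rw [lnbIdeal_concat _ _ (by simp)] at hx
    rw [← LieSubmodule.mem_toSubmodule, LieSubmodule.lieIdeal_oper_eq_linear_span'] at hx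
    refine Submodule.span_induction (p := fun x _ => x ∈ Submodule.span R
      {y : L | ∃ (β : BracketArr (m + 1 + 1)) (a : Fin (m + 1 + 1) → L),
        (∀ s, a s ∈ I (f s)) ∧ y = β.eval a}) ?_ ?_ ?_ ?_ hx
    · rintro _ ⟨y, hy, b, hb, rfl⟩
      have hy' := ih (fun i => f i.castSucc) y hy
      refine Submodule.span_induction (p := fun y _ => ⁅y, b⁆ ∈ Submodule.span R
        {y : L | ∃ (β : BracketArr (m + 1 + 1)) (a : Fin (m + 1 + 1) → L),
          (∀ s, a s ∈ I (f s)) ∧ y = β.eval a}) ?_ ?_ ?_ ?_ hy'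
      · rintro _ ⟨β, a, ha, rfl⟩
        set c : Fin (m + 1 + 1) → L := Fin.snoc a b with hc
        refine Submodule.subset_span ⟨.node β .leaf, c, ?_, ?_⟩
        · intro s
          refine Fin.lastCases ?_ ?_ s
          · simpa [hc] using hb
          · intro i
            simpa [hc] using ha i
        · have hnode : BracketArr.eval (BracketArr.node β BracketArr.leaf) c
              = ⁅β.eval (fun i => c (Fin.castAdd 1 i)),
                 c (Fin.natAdd (m + 1) (0 : Fin 1))⁆ := by
            simp [BracketArr.eval]
          rw [hnode]
          congr 1
          · congr 1
            funext i
            have h1 : Fin.castAdd 1 i = Fin.castSucc i := rfl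
            rw [hc, h1, Fin.snoc_castSucc]
          · have h2 : Fin.natAdd (m + 1) (0 : Fin 1) = Fin.last (m + 1) := by
              ext
              simp
            rw [hc, h2, Fin.snoc_last]
      · simp
      · intro c d _ _ hc hd
        rw [add_lie]
        exact add_mem hc hd
      · intro r c _ hc
        rw [smul_lie]
        exact Submodule.smul_mem _ r hc
    · simp
    · intro c d _ _ hc hd
      exact add_mem hc hd
    · intro r c _ hc
      exact Submodule.smul_mem _ r hc

end Part4


/-- **Statement 11.** Let `L` be a Lie algebra over a commutative ring and `I₁, …, I_n` Lie
ideals of `L` with `n ≥ 2`.  Then the fat bracket sum equals the symmetric bracket sum: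
`[[I₁, I₂, …, I_n]] = [[I₁, I₂], …, I_n]_S`. -/
theorem fatBracketSum_eq_symBracketSum {R : Type*} [CommRing R] {L : Type*} [LieRing L]
    [LieAlgebra R L] {n : ℕ} (hn : 2 ≤ n) (I : Fin n → LieIdeal R L) :
    fatBracketSum I = symBracketSum I := by
  obtain ⟨m, rfl⟩ : ∃ m, n = m + 1 := ⟨n - 1, by omega⟩
  apply le_antisymm
  · rw [fatBracketSum, LieSubmodule.lieSpan_le]
    rintro x ⟨t, htn, β, idx, hsurj, a, ha, rfl⟩
    have h1 : β.eval a ∈ bIdealL β ((List.ofFn idx).map I) := by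
      rw [List.map_ofFn]
      exact eval_mem_bIdealL β (fun s => I (idx s)) a ha
    have h2 := bIdealL_le_perm_sup I β (List.ofFn idx) (by simp)
    have h3 : (⨆ K : {K : List (Fin (m + 1)) // K.Perm (List.ofFn idx)},
        lnbIdeal (K.1.map I)) ≤ symBracketSum I := by
      refine iSup_le fun K => ?_
      refine lnb_covering_le_sym (Nat.succ_pos m) I K.1.length K.1 le_rfl ?_
      intro i
      rw [K.2.mem_iff]
      simp only [List.mem_ofFn]
      obtain ⟨s, hs⟩ := hsurj i
      exact ⟨s, hs⟩
    exact (h2.trans h3) h1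
  · refine iSup_le fun σ => ?_
    intro x hx
    have h1 := lnb_mem_span I m (⇑σ) x hx
    have h2 : {y : L | ∃ (β : BracketArr (m + 1)) (a : Fin (m + 1) → L),
        (∀ s, a s ∈ I (σ s)) ∧ y = β.eval a} ⊆ ((fatBracketSum I : Submodule R L) : Set L) := by
      rintro y ⟨β, a, ha, rfl⟩
      show β.eval a ∈ fatBracketSum I
      exact LieSubmodule.subset_lieSpan ⟨m + 1, le_rfl, β, ⇑σ, σ.surjective, a, ha, rfl⟩
    exact Submodule.span_le.mpr h2 h1
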